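/- The function f(a,b) = (a+b)·h(a/(a+b)) for a,b > 0 (with f extended by 0 when a+b=0) is monotonically increasing in b when a is fixed and a ≤ b. -/

import Mathlib

noncomputable def binEnt (x : ℝ) : ℝ := -(x * Real.logb 2 x) - (1 - x) * Real.logb 2 (1 - x)

noncomputable def f (a b : ℝ) : ℝ := if a + b = 0 then 0 else (a + b) * binEnt (a / (a + b))

theorem f_mono_in_b (a : ℝ) (ha : 0 < a) :
    MonotoneOn (fun b => f a b) {b : ℝ | 0 < b ∧ a ≤ b} := by
  have hset : {b : ℝ | 0 < b ∧ a ≤ b} = Set.Ici a := by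
    ext b
    simp only [Set.mem_setOf_eq, Set.mem_Ici]
    exact ⟨fun h => h.2, fun h => ⟨lt_of_lt_of_le ha h, h⟩⟩
  rw [hset]
  set g : ℝ → ℝ := fun b =>
    ((a + b) * Real.log (a + b) - a * Real.log a - b * Real.log b) / Real.log 2 with hgdef
  have hlog2 : (0 : ℝ) < Real.log 2 := Real.log_pos (by norm_num)
  have heq : ∀ b ∈ Set.Ici a, f a b = g b := by
    intro b hb
    have hb0 : 0 < b := lt_of_lt_of_le ha hb
    have hs : 0 < a + b := by linarith
    have h1 : (1 : ℝ) - a / (a + b) = b / (a + b) := by field_simp; ring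
    simp only [f, binEnt, Real.logb, h1, hgdef]
    rw [if_neg hs.ne', Real.log_div ha.ne' hs.ne', Real.log_div hb0.ne' hs.ne']
    field_simp
    ring
  have hd : ∀ b, 0 < b → HasDerivAt g ((Real.log (a + b) - Real.log b) / Real.log 2) b := by
    intro b hb
    have hs : 0 < a + b := by linarith
    have h1 : HasDerivAt (fun x : ℝ => (a + x) * Real.log (a + x)) (Real.log (a + b) + 1) b := by
      have := (Real.hasDerivAt_mul_log hs.ne').comp b ((hasDerivAt_id b).const_add a)
      simpa [Function.comp_def] using this
    have h2 : HasDerivAt (fun x : ℝ => x * Real.log x) (Real.log b + 1) b :=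
      Real.hasDerivAt_mul_log hb.ne'
    have h3 := ((h1.sub_const (a * Real.log a)).sub h2).div_const (Real.log 2)
    have harith : (Real.log (a + b) + 1 - (Real.log b + 1)) / Real.log 2
        = (Real.log (a + b) - Real.log b) / Real.log 2 := by ring
    rw [harith] at h3
    exact h3
  have hmono : MonotoneOn g (Set.Ici a) := by
    apply monotoneOn_of_deriv_nonneg (convex_Ici a)
    · intro b hb
      exact (hd b (lt_of_lt_of_le ha hb)).continuousAt.continuousWithinAt
    · intro b hb
      rw [interior_Ici] at hb
      exact (hd b (lt_trans ha hb)).differentiableAt.differentiableWithinAt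
    · intro b hb
      rw [interior_Ici] at hb
      have hb0 : 0 < b := lt_trans ha hb
      rw [(hd b hb0).deriv]
      apply div_nonneg _ hlog2.le
      have : Real.log b ≤ Real.log (a + b) :=
        Real.log_le_log hb0 (by linarith)
      linarith
  intro x hx y hy hxy
  simp only
  rw [heq x hx, heq y hy]
  exact hmono hx hy hxy
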